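/- Let g₂, g₃ ∈ ℂ, let U ⊆ ℂ be open, and let x₀, y₀ ∈ ℂ satisfy y₀² = 4x₀³ − g₂x₀ − g₃ with x₀ ∉ U. Let g : U → ℂ be differentiable with g(x)² = 4x³ − g₂x − g₃ and g(x) ≠ 0 for all x ∈ U, and let Ψ : U → ℂ be differentiable and satisfy the first-order equation Ψ'(x) = [(g(x) + y₀)/(2(x − x₀)g(x))]·Ψ(x) on U. Then Ψ is twice differentiable on U and satisfies the ℓ=1 algebraic Lamé equation f(x)Ψ''(x) + (1/2)f'(x)Ψ'(x) = (2x + x₀)Ψ(x) for all x ∈ U, where f(x) = 4x³ − g₂x − g₃. That is, the fundamental function Φ(x, y; x₀, y₀) = exp[(1/2)∫((y + y₀)/(x − x₀)) dx/y] solves the ℓ=1 Lamé equation with spectral parameter B = x₀. -/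

import Mathlib

private lemma lame_aux1 (u y₀ G D P : ℂ) (hu : u ≠ 0) (hG : G ≠ 0) :
    G^2 *
      ((D * (2*u*G) - (G+y₀)*(2*G + 2*u*D)) / (2*u*G)^2 * P
        + (G+y₀)/(2*u*G) * ((G+y₀)/(2*u*G) * P))
     + (1/2)*(2*G*D) * ((G+y₀)/(2*u*G) * P)
      = (G^2*(y₀^2 - G^2 + 2*u*(D*G)))/(2*u*G)^2 * P := by
  have hd : 2*u*G ≠ 0 := by simp [hu, hG]
  have hw : (2*u*G) * (2*u*G)⁻¹ = 1 := mul_inv_cancel₀ hd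
  simp only [div_eq_mul_inv, ← inv_pow]
  linear_combination (-(D * P * (y₀ + G) * G * (2*u*G)⁻¹)) * hw

private lemma lame_aux2 (u c G P : ℂ) (hu : u ≠ 0) (hG : G ≠ 0) :
    (G^2*(4*u^2*c))/(2*u*G)^2 * P = c * P := by
  rw [show (2*u*G)^2 = 4*u^2*G^2 by ring]
  rw [show G^2*(4*u^2*c) = (4*u^2*G^2)*c by ring]
  rw [mul_div_cancel_left₀ _ (by simp [hu, hG] : (4:ℂ)*u^2*G^2 ≠ 0)]

private lemma lame_key (x x₀ y₀ g₂ g₃ G D P : ℂ) (hx : x - x₀ ≠ 0) (hG : G ≠ 0)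
    (h1 : G ^ 2 = 4*x^3 - g₂*x - g₃)
    (h2 : 2*G*D = 12*x^2 - g₂)
    (h3 : y₀ ^ 2 = 4*x₀^3 - g₂*x₀ - g₃) :
    (4*x^3 - g₂*x - g₃) *
      ((D * (2*(x-x₀)*G) - (G+y₀)*(2*G + 2*(x-x₀)*D)) / (2*(x-x₀)*G)^2 * P
        + (G+y₀)/(2*(x-x₀)*G) * ((G+y₀)/(2*(x-x₀)*G) * P))
     + (1/2)*(12*x^2 - g₂) * ((G+y₀)/(2*(x-x₀)*G) * P)
    = (2*x + x₀) * P := by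
  have main : y₀^2 - G^2 + 2*(x-x₀)*(D*G) = 4*(x-x₀)^2*(2*x+x₀) := by
    linear_combination h3 - h1 + (x-x₀)*h2
  rw [← h1, ← h2, lame_aux1 (x-x₀) y₀ G D P hx hG, main,
    lame_aux2 (x-x₀) (2*x+x₀) G P hx hG]

/-- Let `y₀² = 4x₀³ − g₂x₀ − g₃` with `x₀ ∉ U`, `U ⊆ ℂ` open.  Let
`g` be differentiable on `U` with `g(x)² = 4x³ − g₂x − g₃` and `g(x) ≠ 0` (a branch of
`y` on `U`), and let `Ψ` be differentiable on `U` with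
`Ψ'(x) = [(g(x) + y₀)/(2(x − x₀)g(x))]·Ψ(x)`.  Then `Ψ` is twice differentiable on `U`
and satisfies the ℓ=1 algebraic Lamé equation
`f(x)Ψ''(x) + (1/2)f'(x)Ψ'(x) = (2x + x₀)Ψ(x)` on `U`, where `f(x) = 4x³ − g₂x − g₃`:
the fundamental function `Φ(x, y; x₀, y₀)` solves the ℓ=1 Lamé equation with spectral
parameter `B = x₀`. -/
theorem lame_l1_fundamental_function_solves (g₂ g₃ x₀ y₀ : ℂ) (U : Set ℂ)
    (hU : IsOpen U) (hx₀ : x₀ ∉ U)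
    (hy₀ : y₀ ^ 2 = 4 * x₀ ^ 3 - g₂ * x₀ - g₃)
    (g Ψ : ℂ → ℂ)
    (hg : ∀ x ∈ U, DifferentiableAt ℂ g x)
    (hgf : ∀ x ∈ U, g x ^ 2 = 4 * x ^ 3 - g₂ * x - g₃)
    (hgne : ∀ x ∈ U, g x ≠ 0)
    (hΨ : ∀ x ∈ U, DifferentiableAt ℂ Ψ x)
    (hΨ' : ∀ x ∈ U, deriv Ψ x = (g x + y₀) / (2 * (x - x₀) * g x) * Ψ x) :
    ∀ x ∈ U, DifferentiableAt ℂ (deriv Ψ) x ∧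
      (4 * x ^ 3 - g₂ * x - g₃) * deriv (deriv Ψ) x
          + (1 / 2) * (12 * x ^ 2 - g₂) * deriv Ψ x
        = (2 * x + x₀) * Ψ x := by
  intro x hx
  have hmem : U ∈ nhds x := hU.mem_nhds hx
  have hxne : x - x₀ ≠ 0 := sub_ne_zero.mpr (fun h => hx₀ (h ▸ hx))
  have hgx : DifferentiableAt ℂ g x := hg x hx
  have hΨx : DifferentiableAt ℂ Ψ x := hΨ x hx
  have hgnex : g x ≠ 0 := hgne x hx
  have hden : 2*(x-x₀)*g x ≠ 0 := by simp [hxne, hgnex]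
  -- derivative of g from g² = f
  have hpoly : HasDerivAt (fun t : ℂ => 4*t^3 - g₂*t - g₃) (12*x^2 - g₂) x := by
    have h := (((hasDerivAt_pow 3 x).const_mul 4).fun_sub ((hasDerivAt_id x).const_mul g₂)).sub_const g₃
    exact h.congr_deriv (by rw [show (3:ℕ)-1 = 2 from rfl]; push_cast; ring)
  have hsq : (fun t => g t ^ 2) =ᶠ[nhds x] (fun t => 4*t^3 - g₂*t - g₃) := by
    filter_upwards [hmem] with t ht using hgf t ht
  have h2' : 2 * g x * deriv g x = 12*x^2 - g₂ := by
    have e1 : deriv (fun t => g t ^ 2) x = deriv (fun t : ℂ => 4*t^3 - g₂*t - g₃) x :=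
      hsq.deriv_eq
    rw [hpoly.deriv] at e1
    rw [← e1, (hgx.hasDerivAt.fun_pow 2).deriv]
    ring
  -- differentiability pieces
  have hnum : DifferentiableAt ℂ (fun t => g t + y₀) x := hgx.add_const y₀
  have hdd : HasDerivAt (fun t => 2*(t-x₀)*g t) (2 * g x + 2*(x-x₀)*deriv g x) x := by
    have h₁ : HasDerivAt (fun t : ℂ => 2*(t-x₀)) 2 x := by
      simpa using ((hasDerivAt_id x).sub_const x₀).const_mul 2
    simpa using h₁.fun_mul hgx.hasDerivAt
  have hden_diff : DifferentiableAt ℂ (fun t => 2*(t-x₀)*g t) x := hdd.differentiableAt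
  have hq : DifferentiableAt ℂ (fun t => (g t + y₀)/(2*(t-x₀)*g t)) x :=
    hnum.div hden_diff hden
  have hF : DifferentiableAt ℂ (fun t => (g t + y₀)/(2*(t-x₀)*g t) * Ψ t) x := hq.mul hΨx
  have heq : deriv Ψ =ᶠ[nhds x] (fun t => (g t + y₀)/(2*(t-x₀)*g t) * Ψ t) := by
    filter_upwards [hmem] with t ht using hΨ' t ht
  have hd1 : DifferentiableAt ℂ (deriv Ψ) x := hF.congr_of_eventuallyEq heq
  refine ⟨hd1, ?_⟩
  have e2 : deriv (deriv Ψ) x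
      = (deriv g x * (2*(x-x₀)*g x) - (g x + y₀)*(2*g x + 2*(x-x₀)*deriv g x))
          / (2*(x-x₀)*g x)^2 * Ψ x
        + (g x + y₀)/(2*(x-x₀)*g x) * ((g x + y₀)/(2*(x-x₀)*g x) * Ψ x) := by
    rw [heq.deriv_eq, deriv_fun_mul hq hΨx, deriv_fun_div hnum hden_diff hden]
    rw [show deriv (fun t => g t + y₀) x = deriv g x from by
      simpa using (hgx.hasDerivAt.add_const y₀).deriv]
    rw [hdd.deriv, hΨ' x hx]
  rw [e2, hΨ' x hx]
  exact lame_key x x₀ y₀ g₂ g₃ (g x) (deriv g x) (Ψ x) hxne hgnex (hgf x hx) h2' hy₀
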